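/- Let k ≥ 2, let n be even with n ≥ 3k+1, and let x satisfy 2k ≤ x ≤ n-k-1 with x·n even as needed for parity. Then the sequence d = (n-1, …, n-1, x, …, x, k, …, k) of length n, with k leading copies of n-1, n-2k middle copies of x, and k trailing copies of k, is graphic, provided the total degree sum is even. -/

import Mathlib

/-- A finite list of naturals is graphic if it is realized as the degree sequence of a
simple graph. -/
def IsGraphicList (l : List ℕ) : Prop :=
  ∃ (G : SimpleGraph (Fin l.length)) (_ : DecidableRel G.Adj), ∀ i, G.degree i = l.get i

namespace SeqKS

def jumpT (m d : ℕ) : Finset ℕ :=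
  Finset.Icc 1 (d / 2) ∪ Finset.Icc (m - d / 2) (m - 1) ∪ (if d % 2 = 1 then {m / 2} else ∅)

variable {m d : ℕ}

lemma mem_jumpT_iff {a : ℕ} : a ∈ jumpT m d ↔
    (1 ≤ a ∧ a ≤ d / 2) ∨ (m - d / 2 ≤ a ∧ a ≤ m - 1) ∨ (d % 2 = 1 ∧ a = m / 2) := by
  unfold jumpT
  by_cases h : d % 2 = 1 <;> simp [h, Finset.mem_union, Finset.mem_Icc] <;> tauto

lemma mem_jumpT_bounds (hm0 : 0 < m) (hd : d < m) {a : ℕ} (ha : a ∈ jumpT m d) :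
    1 ≤ a ∧ a ≤ m - 1 := by
  rw [mem_jumpT_iff] at ha
  rcases ha with h | h | h <;> omega

lemma jumpT_neg (hm : Even m) (hm0 : 0 < m) (hd : d < m) {a : ℕ} (ha : a ∈ jumpT m d) :
    m - a ∈ jumpT m d := by
  obtain ⟨c, hc⟩ := hm
  rw [mem_jumpT_iff] at ha ⊢
  rcases ha with h | h | h <;> omega

lemma jumpT_card (hm : Even m) (hm0 : 0 < m) (hd : d < m) : (jumpT m d).card = d := by
  obtain ⟨c, hc⟩ := hm
  unfold jumpT
  rw [Finset.card_union_of_disjoint, Finset.card_union_of_disjoint]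
  · by_cases h : d % 2 = 1 <;> simp [h, Nat.card_Icc] <;> omega
  · rw [Finset.disjoint_left]
    intro a ha
    simp only [Finset.mem_Icc] at ha ⊢
    omega
  · rw [Finset.disjoint_left]
    intro a ha
    by_cases h : d % 2 = 1 <;> simp [h, Finset.mem_Icc, Finset.mem_union] at ha ⊢ <;> omega

def jumpS (m d : ℕ) : Finset (ZMod m) := (jumpT m d).image (Nat.cast)

lemma zero_not_mem_jumpS (hm0 : 0 < m) (hd : d < m) : (0 : ZMod m) ∉ jumpS m d := by
  have : NeZero m := ⟨hm0.ne'⟩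
  simp only [jumpS, Finset.mem_image, not_exists, not_and]
  intro a ha h
  have hb := mem_jumpT_bounds hm0 hd ha
  rw [ZMod.natCast_eq_zero_iff] at h
  have := Nat.le_of_dvd (by omega) h
  omega

lemma neg_mem_jumpS (hm : Even m) (hm0 : 0 < m) (hd : d < m) {s : ZMod m}
    (hs : s ∈ jumpS m d) : -s ∈ jumpS m d := by
  simp only [jumpS, Finset.mem_image] at hs ⊢
  obtain ⟨a, ha, rfl⟩ := hs
  refine ⟨m - a, jumpT_neg hm hm0 hd ha, ?_⟩
  have hb := mem_jumpT_bounds hm0 hd ha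
  have : ((m - a : ℕ) : ZMod m) + (a : ZMod m) = ((m : ℕ) : ZMod m) := by
    rw [← Nat.cast_add]; congr 1; omega
  rw [ZMod.natCast_self] at this
  linear_combination this

lemma jumpS_card (hm : Even m) (hm0 : 0 < m) (hd : d < m) : (jumpS m d).card = d := by
  have : NeZero m := ⟨hm0.ne'⟩
  rw [jumpS, Finset.card_image_of_injOn, jumpT_card hm hm0 hd]
  intro a ha b hb h
  have ha' := mem_jumpT_bounds hm0 hd ha
  have hb' := mem_jumpT_bounds hm0 hd hb
  have : (a : ZMod m).val = (b : ZMod m).val := by rw [h]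
  rwa [ZMod.val_cast_of_lt (by omega), ZMod.val_cast_of_lt (by omega)] at this

end SeqKS

namespace SeqKS
open SimpleGraph

variable {m d : ℕ}

lemma circ_adj (hm : Even m) (hm0 : 0 < m) (hd : d < m) {u v : ZMod m} :
    (circulantGraph ((jumpS m d : Finset (ZMod m)) : Set (ZMod m))).Adj u v ↔ u - v ∈ jumpS m d := by
  rw [circulantGraph_adj]
  constructor
  · rintro ⟨hne, h | h⟩
    · exact h
    · have := neg_mem_jumpS hm hm0 hd h
      rwa [neg_sub] at this
  · intro h
    refine ⟨?_, Or.inl h⟩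
    rintro rfl
    rw [sub_self] at h
    exact zero_not_mem_jumpS hm0 hd h

lemma circ_neighborFinset (hm : Even m) (hm0 : 0 < m) (hd : d < m) (v : ZMod m)
    [Fintype (ZMod m)] [DecidableEq (ZMod m)]
    [Fintype ((circulantGraph ((jumpS m d : Finset (ZMod m)) : Set (ZMod m))).neighborSet v)] :
    (circulantGraph ((jumpS m d : Finset (ZMod m)) : Set (ZMod m))).neighborFinset v
      = (jumpS m d).image (fun s => v - s) := by
  ext u
  rw [mem_neighborFinset, circ_adj hm hm0 hd, Finset.mem_image]
  constructor
  · intro h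
    refine ⟨v - u, ?_, by ring⟩
    have := neg_mem_jumpS hm hm0 hd h
    rwa [neg_sub] at this
  · rintro ⟨s, hs, rfl⟩
    rwa [show v - (v - s) = s by ring]

lemma circ_degree (hm : Even m) (hm0 : 0 < m) (hd : d < m) (v : ZMod m)
    [Fintype (ZMod m)] [DecidableEq (ZMod m)]
    [Fintype ((circulantGraph ((jumpS m d : Finset (ZMod m)) : Set (ZMod m))).neighborSet v)] :
    (circulantGraph ((jumpS m d : Finset (ZMod m)) : Set (ZMod m))).degree v = d := by
  rw [degree, circ_neighborFinset hm hm0 hd v,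
    Finset.card_image_of_injective _ (sub_right_injective), jumpS_card hm hm0 hd]

end SeqKS

namespace SeqKS
open SimpleGraph Finset

lemma card_filter_val_lt {N c : ℕ} (h : c ≤ N) :
    (Finset.univ.filter (fun j : Fin N => j.val < c)).card = c := by
  refine Eq.trans ?_ (Finset.card_fin c)
  apply Finset.card_bij (fun (j : Fin N) hj => (⟨j.val, (Finset.mem_filter.mp hj).2⟩ : Fin c))
  · intro a ha; exact Finset.mem_univ _
  · intro a ha b hb hab
    have := congrArg Fin.val hab
    exact Fin.ext this
  · intro b _
    exact ⟨⟨b.val, lt_of_lt_of_le b.2 h⟩, Finset.mem_filter.mpr ⟨Finset.mem_univ _, b.2⟩, rfl⟩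

lemma exists_graph {N k m d : ℕ} (hm : Even m) (hm0 : 0 < m) (hd : d < m)
    (hN : N = k + m + k) :
    ∃ (G : SimpleGraph (Fin N)) (_ : DecidableRel G.Adj), ∀ i : Fin N,
      G.degree i = if i.val < k then N - 1 else if i.val < k + m then k + d else k := by
  classical
  have : NeZero m := ⟨hm0.ne'⟩
  set D := circulantGraph ((jumpS m d : Finset (ZMod m)) : Set (ZMod m)) with hD
  set G : SimpleGraph (Fin N) :=
    { Adj := fun i j => i ≠ j ∧ (i.val < k ∨ j.val < k ∨
        (i.val < k + m ∧ j.val < k + m ∧ D.Adj ↑(i.val - k) ↑(j.val - k)))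
      symm := by
        constructor
        rintro i j ⟨hne, h | h | ⟨h1, h2, h3⟩⟩
        · exact ⟨hne.symm, Or.inr (Or.inl h)⟩
        · exact ⟨hne.symm, Or.inl h⟩
        · exact ⟨hne.symm, Or.inr (Or.inr ⟨h2, h1, h3.symm⟩)⟩
      loopless := by constructor; rintro i ⟨hne, -⟩; exact hne rfl } with hG
  letI instDec : DecidableRel G.Adj := Classical.decRel _
  refine ⟨G, instDec, fun i => ?_⟩
  have hadj : ∀ i j : Fin N, G.Adj i j ↔ i ≠ j ∧ (i.val < k ∨ j.val < k ∨
      (i.val < k + m ∧ j.val < k + m ∧ D.Adj ↑(i.val - k) ↑(j.val - k))) := fun _ _ => Iff.rfl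
  by_cases h1 : i.val < k
  · -- dominating vertex
    have hnb : G.neighborFinset i = Finset.univ.erase i := by
      ext j
      rw [mem_neighborFinset, Finset.mem_erase, hadj]
      constructor
      · rintro ⟨hne, -⟩; exact ⟨hne.symm, Finset.mem_univ _⟩
      · rintro ⟨hne, -⟩; exact ⟨hne.symm, Or.inl h1⟩
    rw [degree, hnb, Finset.card_erase_of_mem (Finset.mem_univ _), Finset.card_univ,
      Fintype.card_fin]
    simp [h1]
  · by_cases h2 : i.val < k + m
    · -- middle vertex
      have hnb : G.neighborFinset i =
          (Finset.univ.filter fun j : Fin N => j.val < k) ∪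
          (Finset.univ.filter fun j : Fin N =>
            k ≤ j.val ∧ j.val < k + m ∧ D.Adj ↑(i.val - k) ↑(j.val - k)) := by
        ext j
        rw [mem_neighborFinset, hadj, Finset.mem_union, Finset.mem_filter, Finset.mem_filter]
        constructor
        · rintro ⟨hne, hik | hjk | ⟨-, hj2, hDa⟩⟩
          · omega
          · exact Or.inl ⟨Finset.mem_univ _, hjk⟩
          · by_cases hjk : j.val < k
            · exact Or.inl ⟨Finset.mem_univ _, hjk⟩
            · exact Or.inr ⟨Finset.mem_univ _, le_of_not_gt hjk, hj2, hDa⟩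
        · rintro (⟨-, hjk⟩ | ⟨-, hj1, hj2, hDa⟩)
          · exact ⟨by intro e; rw [e] at h1; exact h1 hjk, Or.inr (Or.inl hjk)⟩
          · refine ⟨?_, Or.inr (Or.inr ⟨h2, hj2, hDa⟩)⟩
            intro e
            rw [e] at hDa
            exact D.irrefl hDa
      have hdisj : Disjoint (Finset.univ.filter fun j : Fin N => j.val < k)
          (Finset.univ.filter fun j : Fin N =>
            k ≤ j.val ∧ j.val < k + m ∧ D.Adj ↑(i.val - k) ↑(j.val - k)) := by
        rw [Finset.disjoint_left]
        intro j hj hj'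
        rw [Finset.mem_filter] at hj hj'
        omega
      have hcard2 : (Finset.univ.filter fun j : Fin N =>
          k ≤ j.val ∧ j.val < k + m ∧ D.Adj ↑(i.val - k) ↑(j.val - k)).card = d := by
        refine Eq.trans ?_ (circ_degree hm hm0 hd ((i.val - k : ℕ) : ZMod m))
        rw [degree]
        apply Finset.card_bij (fun (j : Fin N) _ => ((j.val - k : ℕ) : ZMod m))
        · intro j hj
          rw [Finset.mem_filter] at hj
          rw [mem_neighborFinset]
          exact hj.2.2.2
        · intro j1 hj1 j2 hj2 he
          rw [Finset.mem_filter] at hj1 hj2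
          have : ((j1.val - k : ℕ) : ZMod m).val = ((j2.val - k : ℕ) : ZMod m).val := by rw [he]
          rw [ZMod.val_cast_of_lt (by omega), ZMod.val_cast_of_lt (by omega)] at this
          exact Fin.ext (by omega)
        · intro z hz
          rw [mem_neighborFinset] at hz
          have hzlt : z.val < m := ZMod.val_lt z
          refine ⟨⟨k + z.val, by omega⟩, Finset.mem_filter.mpr
            ⟨Finset.mem_univ _, by simp, by simp; omega, ?_⟩, ?_⟩
          · simpa [ZMod.natCast_rightInverse z, hD] using hz
          · simp [ZMod.natCast_rightInverse z]
      rw [degree, hnb, Finset.card_union_of_disjoint hdisj,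
        card_filter_val_lt (by omega), hcard2]
      simp [h1, h2]
    · -- low-degree vertex
      have hnb : G.neighborFinset i = Finset.univ.filter fun j : Fin N => j.val < k := by
        ext j
        rw [mem_neighborFinset, hadj, Finset.mem_filter]
        constructor
        · rintro ⟨hne, hik | hjk | ⟨hik, -, -⟩⟩
          · omega
          · exact ⟨Finset.mem_univ _, hjk⟩
          · omega
        · rintro ⟨-, hjk⟩
          exact ⟨by intro e; rw [e] at h1; exact h1 hjk, Or.inr (Or.inl hjk)⟩
      rw [degree, hnb, card_filter_val_lt (by omega)]
      simp [h1, h2]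

end SeqKS

/-- For `k ≥ 2`, `n` even with `n ≥ 3k+1`, and `2k ≤ x ≤ n-k-1`, provided the total
degree sum is even, the sequence with `k` copies of `n-1`, then `n-2k` copies of `x`,
then `k` copies of `k` (length `n`) is graphic. -/
theorem seq_ks_graphic {n k x : ℕ} (hk : 2 ≤ k) (hn : Even n) (hnk : 3 * k + 1 ≤ n)
    (hx1 : 2 * k ≤ x) (hx2 : x ≤ n - k - 1)
    (hsum : Even (k * (n - 1) + (n - 2 * k) * x + k * k)) :
    IsGraphicList
      (List.replicate k (n - 1) ++ List.replicate (n - 2 * k) x ++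
        List.replicate k k) := by
  obtain ⟨c, hc⟩ := hn
  set m := n - 2 * k with hmdef
  set d := x - k with hddef
  have hm : Even m := ⟨c - k, by omega⟩
  have hm0 : 0 < m := by omega
  have hd : d < m := by omega
  rw [IsGraphicList]
  have hlen : (List.replicate k (n - 1) ++ List.replicate m x ++
      List.replicate k k).length = k + m + k := by simp; omega
  obtain ⟨G, inst, hdeg⟩ := SeqKS.exists_graph hm hm0 hd hlen
  refine ⟨G, inst, fun i => ?_⟩
  rw [hdeg i, List.get_eq_getElem]
  have hik : i.val < k + m + k := lt_of_lt_of_eq i.isLt hlen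
  by_cases c1 : i.val < k
  · rw [List.getElem_append_left (by simp; omega), List.getElem_append_left (by simp; omega),
      List.getElem_replicate]
    rw [if_pos c1]
    omega
  · by_cases c2 : i.val < k + m
    · rw [List.getElem_append_left (by simp; omega),
        List.getElem_append_right (by simp; omega), List.getElem_replicate]
      rw [if_neg c1, if_pos c2]
      omega
    · rw [List.getElem_append_right (by simp; omega), List.getElem_replicate]
      rw [if_neg c1, if_neg c2]
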